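/- Let η, ξ be real numbers with 0 < η < π/4 and 0 < ξ < 2η. Set γ = 1 + 2cos(4η) and τ = sin(2η+ξ)/sin(2η−ξ). Then τ ≠ 1, τ + γ ≠ 0, and τ·(1 + γ)/((τ − 1)·(τ + γ)) = sin(2η+ξ)·sin(2η−ξ)/(sin(ξ)·sin(4η−ξ)). -/

import Mathlib

/-- Closed parametric form of the slope function β(ξ) for the QTHADT model. -/
theorem stmt16 (η ξ : ℝ) (h1 : 0 < η) (h2 : η < Real.pi/4) (h3 : 0 < ξ) (h4 : ξ < 2*η)
    (γ τ : ℝ) (hγ : γ = 1 + 2*Real.cos (4*η))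
    (hτ : τ = Real.sin (2*η + ξ) / Real.sin (2*η - ξ)) :
    τ ≠ 1 ∧ τ + γ ≠ 0 ∧
    τ * (1 + γ) / ((τ - 1) * (τ + γ))
      = Real.sin (2*η + ξ) * Real.sin (2*η - ξ) / (Real.sin ξ * Real.sin (4*η - ξ)) := by
  have hpi := Real.pi_pos
  have hsb : 0 < Real.sin (2*η - ξ) := Real.sin_pos_of_pos_of_lt_pi (by linarith) (by linarith)
  have hsa : 0 < Real.sin (2*η + ξ) := Real.sin_pos_of_pos_of_lt_pi (by linarith) (by linarith)
  have hu : 0 < Real.sin ξ := Real.sin_pos_of_pos_of_lt_pi h3 (by linarith)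
  have hs4 : 0 < Real.sin (4*η - ξ) := Real.sin_pos_of_pos_of_lt_pi (by linarith) (by linarith)
  have hc : 0 < Real.cos (2*η) := Real.cos_pos_of_mem_Ioo ⟨by linarith, by linarith⟩
  have hc4 : Real.cos (4*η) = 2*(Real.cos (2*η))^2 - 1 := by
    have h : (4:ℝ)*η = 2*(2*η) := by ring
    rw [h, Real.cos_two_mul]
  have e1 : Real.sin (2*η+ξ) - Real.sin (2*η-ξ) = 2*Real.cos (2*η)*Real.sin ξ := by
    rw [Real.sin_add, Real.sin_sub]; ring
  have e2 : Real.sin (2*η+ξ) + γ * Real.sin (2*η-ξ)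
      = 2*Real.cos (2*η)*Real.sin (4*η-ξ) := by
    have h : (4:ℝ)*η - ξ = 2*η + (2*η - ξ) := by ring
    rw [hγ, hc4, h, Real.sin_add, Real.sin_add, Real.sin_sub, Real.cos_sub]
    linear_combination (-2*Real.cos (2*η)*Real.sin ξ) * Real.sin_sq_add_cos_sq (2*η)
  have hτ1 : τ - 1 = 2*Real.cos (2*η)*Real.sin ξ / Real.sin (2*η - ξ) := by
    rw [hτ]; field_simp; linear_combination e1
  have hτγ : τ + γ = 2*Real.cos (2*η)*Real.sin (4*η-ξ) / Real.sin (2*η - ξ) := by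
    rw [hτ, ← e2, add_div, mul_div_cancel_right₀ _ hsb.ne']
  have h1γ : 1 + γ = 4*(Real.cos (2*η))^2 := by rw [hγ, hc4]; ring
  refine ⟨?_, ?_, ?_⟩
  · intro h
    rw [h] at hτ1
    simp at hτ1
    have := div_pos (by positivity : 0 < 2*Real.cos (2*η)*Real.sin ξ) hsb
    linarith
  · rw [hτγ]
    positivity
  · rw [hτ1, hτγ, h1γ, hτ]
    field_simp
    ring
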